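/- (Zygmund's L^4 estimate) For every finitely supported sequence (a_k)_{k∈ℤ} of complex numbers, ∫_0^{1/(2π)} ∫_0^1 | \sum_k a_k e^{-4π^2 i k^2 t} e^{2π i k x} |^4 dx dt ≤ C ( \sum_k |a_k|^2 )^2 for an absolute constant C > 0. -/

import Mathlib

open Real Complex Finset

noncomputable def zf (a : ℤ → ℂ) (k : ℤ) (t x : ℝ) : ℂ :=
  a k * Complex.exp (-4 * (π:ℂ) ^ 2 * Complex.I * (k : ℂ) ^ 2 * (t:ℂ)) *
    Complex.exp (2 * (π:ℂ) * Complex.I * (k : ℂ) * (x:ℂ))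

lemma zygConj (a : ℤ → ℂ) (k : ℤ) (t x : ℝ) :
    (starRingEnd ℂ) (zf a k t x)
      = (starRingEnd ℂ) (a k) * Complex.exp (4 * (π:ℂ) ^ 2 * Complex.I * (k : ℂ) ^ 2 * (t:ℂ)) *
          Complex.exp (-(2 * (π:ℂ) * Complex.I * (k : ℂ) * (x:ℂ))) := by
  unfold zf
  rw [map_mul, map_mul, ← Complex.exp_conj, ← Complex.exp_conj]
  have h1 : (starRingEnd ℂ) (-4 * (π:ℂ) ^ 2 * Complex.I * (k : ℂ) ^ 2 * (t:ℂ))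
      = 4 * (π:ℂ) ^ 2 * Complex.I * (k : ℂ) ^ 2 * (t:ℂ) := by
    simp only [map_mul, map_neg, map_ofNat, map_pow, Complex.conj_I, Complex.conj_ofReal,
      map_intCast]
    ring
  have h2 : (starRingEnd ℂ) (2 * (π:ℂ) * Complex.I * (k : ℂ) * (x:ℂ))
      = -(2 * (π:ℂ) * Complex.I * (k : ℂ) * (x:ℂ)) := by
    simp only [map_mul, map_ofNat, Complex.conj_I, Complex.conj_ofReal, map_intCast]
    ring
  rw [h1, h2]

lemma zygTerm (a : ℤ → ℂ) (k1 k2 k3 k4 : ℤ) (t x : ℝ) :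
    zf a k1 t x * zf a k2 t x * (starRingEnd ℂ) (zf a k3 t x) * (starRingEnd ℂ) (zf a k4 t x)
      = a k1 * a k2 * (starRingEnd ℂ) (a k3) * (starRingEnd ℂ) (a k4) *
          Complex.exp (-4 * (π:ℂ) ^ 2 * Complex.I * ((k1^2+k2^2-k3^2-k4^2 : ℤ):ℂ) * (t:ℂ)) *
          Complex.exp (2 * (π:ℂ) * Complex.I * ((k1+k2-k3-k4 : ℤ):ℂ) * (x:ℂ)) := by
  rw [zygConj, zygConj]
  rw [show Complex.exp (-4 * (π:ℂ) ^ 2 * Complex.I * ((k1^2+k2^2-k3^2-k4^2 : ℤ):ℂ) * (t:ℂ))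
      = Complex.exp (-4 * (π:ℂ) ^ 2 * Complex.I * (k1 : ℂ) ^ 2 * (t:ℂ)) *
        Complex.exp (-4 * (π:ℂ) ^ 2 * Complex.I * (k2 : ℂ) ^ 2 * (t:ℂ)) *
        Complex.exp (4 * (π:ℂ) ^ 2 * Complex.I * (k3 : ℂ) ^ 2 * (t:ℂ)) *
        Complex.exp (4 * (π:ℂ) ^ 2 * Complex.I * (k4 : ℂ) ^ 2 * (t:ℂ)) from by
    rw [← Complex.exp_add, ← Complex.exp_add, ← Complex.exp_add]; congr 1; push_cast; ring]
  rw [show Complex.exp (2 * (π:ℂ) * Complex.I * ((k1+k2-k3-k4 : ℤ):ℂ) * (x:ℂ))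
      = Complex.exp (2 * (π:ℂ) * Complex.I * (k1 : ℂ) * (x:ℂ)) *
        Complex.exp (2 * (π:ℂ) * Complex.I * (k2 : ℂ) * (x:ℂ)) *
        Complex.exp (-(2 * (π:ℂ) * Complex.I * (k3 : ℂ) * (x:ℂ))) *
        Complex.exp (-(2 * (π:ℂ) * Complex.I * (k4 : ℂ) * (x:ℂ))) from by
    rw [← Complex.exp_add, ← Complex.exp_add, ← Complex.exp_add]; congr 1; push_cast; ring]
  unfold zf
  ring

lemma zygSum4 (s : Finset ℤ) (f g : ℤ → ℂ) :
    (∑ k ∈ s, f k) * (∑ k ∈ s, f k) * (∑ k ∈ s, g k) * (∑ k ∈ s, g k)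
      = ∑ k1 ∈ s, ∑ k2 ∈ s, ∑ k3 ∈ s, ∑ k4 ∈ s, f k1 * f k2 * g k3 * g k4 := by
  calc (∑ k ∈ s, f k) * (∑ k ∈ s, f k) * (∑ k ∈ s, g k) * (∑ k ∈ s, g k)
      = ((∑ k ∈ s, f k) * (∑ k ∈ s, f k)) * ((∑ k ∈ s, g k) * (∑ k ∈ s, g k)) := by ring
    _ = (∑ k1 ∈ s, ∑ k2 ∈ s, f k1 * f k2) * (∑ k3 ∈ s, ∑ k4 ∈ s, g k3 * g k4) := by
        rw [Finset.sum_mul_sum s s f f, Finset.sum_mul_sum s s g g]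
    _ = ∑ k1 ∈ s, (∑ k2 ∈ s, f k1 * f k2) * (∑ k3 ∈ s, ∑ k4 ∈ s, g k3 * g k4) :=
        Finset.sum_mul _ _ _
    _ = ∑ k1 ∈ s, ∑ k2 ∈ s, ∑ k3 ∈ s, ∑ k4 ∈ s, f k1 * f k2 * g k3 * g k4 :=
        Finset.sum_congr rfl fun k1 _ => by
          rw [Finset.sum_mul]
          refine Finset.sum_congr rfl fun k2 _ => ?_
          rw [Finset.mul_sum]
          refine Finset.sum_congr rfl fun k3 _ => ?_
          rw [Finset.mul_sum]
          exact Finset.sum_congr rfl fun k4 _ => by ring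

lemma zygAbs (z : ℂ) :
    ‖z‖ ^ 4 = (z * z * (starRingEnd ℂ) z * (starRingEnd ℂ) z).re := by
  have h : z * z * (starRingEnd ℂ) z * (starRingEnd ℂ) z
      = ((Complex.normSq z * Complex.normSq z : ℝ) : ℂ) := by
    rw [show z * z * (starRingEnd ℂ) z * (starRingEnd ℂ) z
        = (z * (starRingEnd ℂ) z) * (z * (starRingEnd ℂ) z) by ring, Complex.mul_conj]
    push_cast; ring
  rw [h, Complex.ofReal_re, ← Complex.sq_norm]; ring

lemma zygContX (A c : ℂ) : Continuous fun x : ℝ => A * Complex.exp (c * (x:ℂ)) :=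
  continuous_const.mul (Complex.continuous_exp.comp (continuous_const.mul
    Complex.continuous_ofReal))

lemma zygContT (A c C : ℂ) : Continuous fun t : ℝ => A * Complex.exp (c * (t:ℂ)) * C :=
  (zygContX A c).mul continuous_const

lemma zygX (n : ℤ) :
    ∫ x in (0:ℝ)..1, Complex.exp (2 * (π:ℂ) * Complex.I * (n:ℂ) * x)
      = if n = 0 then 1 else 0 := by
  rcases eq_or_ne n 0 with h | h
  · simp [h]
  · rw [if_neg h]
    have hc : (2 * (π:ℂ) * Complex.I * (n:ℂ)) ≠ 0 := by
      simp [Real.pi_ne_zero, Complex.I_ne_zero, h]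
    rw [integral_exp_mul_complex hc, Complex.ofReal_one, Complex.ofReal_zero, mul_one, mul_zero,
      Complex.exp_zero,
      show (2 * (π:ℂ) * Complex.I * (n:ℂ)) = (n:ℤ) * (2 * π * Complex.I) by ring,
      Complex.exp_int_mul_two_pi_mul_I]
    simp

lemma zygT (m : ℤ) :
    ∫ t in (0:ℝ)..(1 / (2 * π)), Complex.exp (-4 * (π:ℂ) ^ 2 * Complex.I * (m:ℂ) * t)
      = if m = 0 then ((1 / (2 * π) : ℝ) : ℂ) else 0 := by
  rcases eq_or_ne m 0 with h | h
  · simp [h]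
  · rw [if_neg h]
    have hc : (-4 * (π:ℂ) ^ 2 * Complex.I * (m:ℂ)) ≠ 0 := by
      simp [Real.pi_ne_zero, Complex.I_ne_zero, h]
    have h1 : Complex.exp (-4 * (π:ℂ) ^ 2 * Complex.I * (m:ℂ) * ((1 / (2 * π) : ℝ):ℂ)) = 1 := by
      rw [show (-4 * (π:ℂ) ^ 2 * Complex.I * (m:ℂ) * ((1 / (2 * π) : ℝ):ℂ))
          = ((-m : ℤ) * (2 * π * Complex.I)) * ((π:ℂ) * (π:ℂ)⁻¹) by push_cast; ring,
        mul_inv_cancel₀ (by exact_mod_cast Real.pi_ne_zero), mul_one]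
      exact Complex.exp_int_mul_two_pi_mul_I (-m)
    rw [integral_exp_mul_complex hc, h1, Complex.ofReal_zero, mul_zero, Complex.exp_zero]
    simp

lemma zygInner (s : Finset ℤ) (a : ℤ → ℂ) (t : ℝ) :
    (∫ x in (0:ℝ)..1, ‖∑ k ∈ s, zf a k t x‖^4)
      = (∑ k1 ∈ s, ∑ k2 ∈ s, ∑ k3 ∈ s, ∑ k4 ∈ s,
          a k1 * a k2 * (starRingEnd ℂ) (a k3) * (starRingEnd ℂ) (a k4) *
            Complex.exp (-4 * (π:ℂ) ^ 2 * Complex.I * ((k1^2+k2^2-k3^2-k4^2 : ℤ):ℂ) * (t:ℂ)) *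
            (if k1+k2-k3-k4 = 0 then (1:ℂ) else 0)).re := by
  have hpt : ∀ x : ℝ, ‖∑ k ∈ s, zf a k t x‖^4
      = (∑ k1 ∈ s, ∑ k2 ∈ s, ∑ k3 ∈ s, ∑ k4 ∈ s,
          a k1 * a k2 * (starRingEnd ℂ) (a k3) * (starRingEnd ℂ) (a k4) *
            Complex.exp (-4 * (π:ℂ) ^ 2 * Complex.I * ((k1^2+k2^2-k3^2-k4^2 : ℤ):ℂ) * (t:ℂ)) *
            Complex.exp (2 * (π:ℂ) * Complex.I * ((k1+k2-k3-k4 : ℤ):ℂ) * (x:ℂ))).re := by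
    intro x
    rw [zygAbs, map_sum, zygSum4]
    congr 1
    exact Finset.sum_congr rfl fun k1 _ => Finset.sum_congr rfl fun k2 _ =>
      Finset.sum_congr rfl fun k3 _ => Finset.sum_congr rfl fun k4 _ => zygTerm a k1 k2 k3 k4 t x
  simp only [hpt]
  have hInt : IntervalIntegrable (fun x : ℝ => ∑ k1 ∈ s, ∑ k2 ∈ s, ∑ k3 ∈ s, ∑ k4 ∈ s,
      a k1 * a k2 * (starRingEnd ℂ) (a k3) * (starRingEnd ℂ) (a k4) *
        Complex.exp (-4 * (π:ℂ) ^ 2 * Complex.I * ((k1^2+k2^2-k3^2-k4^2 : ℤ):ℂ) * (t:ℂ)) *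
        Complex.exp (2 * (π:ℂ) * Complex.I * ((k1+k2-k3-k4 : ℤ):ℂ) * (x:ℂ)))
      MeasureTheory.volume 0 1 := by
    refine Continuous.intervalIntegrable ?_ 0 1
    exact continuous_finset_sum _ fun k1 _ => continuous_finset_sum _ fun k2 _ =>
      continuous_finset_sum _ fun k3 _ => continuous_finset_sum _ fun k4 _ => zygContX _ _
  have hre := ContinuousLinearMap.intervalIntegral_comp_comm Complex.reCLM hInt
  simp only [Complex.reCLM_apply] at hre
  rw [hre]
  congr 1
  rw [intervalIntegral.integral_finset_sum (fun k1 _ => by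
    refine Continuous.intervalIntegrable ?_ 0 1
    exact continuous_finset_sum _ fun k2 _ => continuous_finset_sum _ fun k3 _ =>
      continuous_finset_sum _ fun k4 _ => zygContX _ _)]
  refine Finset.sum_congr rfl fun k1 _ => ?_
  rw [intervalIntegral.integral_finset_sum (fun k2 _ => by
    refine Continuous.intervalIntegrable ?_ 0 1
    exact continuous_finset_sum _ fun k3 _ => continuous_finset_sum _ fun k4 _ => zygContX _ _)]
  refine Finset.sum_congr rfl fun k2 _ => ?_
  rw [intervalIntegral.integral_finset_sum (fun k3 _ => by
    refine Continuous.intervalIntegrable ?_ 0 1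
    exact continuous_finset_sum _ fun k4 _ => zygContX _ _)]
  refine Finset.sum_congr rfl fun k3 _ => ?_
  rw [intervalIntegral.integral_finset_sum (fun k4 _ => (zygContX _ _).intervalIntegrable 0 1)]
  refine Finset.sum_congr rfl fun k4 _ => ?_
  rw [intervalIntegral.integral_const_mul, zygX]

lemma zygOuter (s : Finset ℤ) (a : ℤ → ℂ) :
    (∫ t in (0:ℝ)..(1 / (2 * π)), ∫ x in (0:ℝ)..1, ‖∑ k ∈ s, zf a k t x‖^4)
      = (∑ k1 ∈ s, ∑ k2 ∈ s, ∑ k3 ∈ s, ∑ k4 ∈ s,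
          a k1 * a k2 * (starRingEnd ℂ) (a k3) * (starRingEnd ℂ) (a k4) *
            (if k1^2+k2^2-k3^2-k4^2 = 0 then ((1 / (2 * π) : ℝ):ℂ) else 0) *
            (if k1+k2-k3-k4 = 0 then (1:ℂ) else 0)).re := by
  simp only [zygInner]
  have hInt : IntervalIntegrable (fun t : ℝ => ∑ k1 ∈ s, ∑ k2 ∈ s, ∑ k3 ∈ s, ∑ k4 ∈ s,
      a k1 * a k2 * (starRingEnd ℂ) (a k3) * (starRingEnd ℂ) (a k4) *
        Complex.exp (-4 * (π:ℂ) ^ 2 * Complex.I * ((k1^2+k2^2-k3^2-k4^2 : ℤ):ℂ) * (t:ℂ)) *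
        (if k1+k2-k3-k4 = 0 then (1:ℂ) else 0))
      MeasureTheory.volume 0 (1 / (2 * π)) := by
    refine Continuous.intervalIntegrable ?_ _ _
    exact continuous_finset_sum _ fun k1 _ => continuous_finset_sum _ fun k2 _ =>
      continuous_finset_sum _ fun k3 _ => continuous_finset_sum _ fun k4 _ => zygContT _ _ _
  have hre := ContinuousLinearMap.intervalIntegral_comp_comm Complex.reCLM hInt
  simp only [Complex.reCLM_apply] at hre
  rw [hre]
  congr 1
  rw [intervalIntegral.integral_finset_sum (fun k1 _ => by
    refine Continuous.intervalIntegrable ?_ _ _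
    exact continuous_finset_sum _ fun k2 _ => continuous_finset_sum _ fun k3 _ =>
      continuous_finset_sum _ fun k4 _ => zygContT _ _ _)]
  refine Finset.sum_congr rfl fun k1 _ => ?_
  rw [intervalIntegral.integral_finset_sum (fun k2 _ => by
    refine Continuous.intervalIntegrable ?_ _ _
    exact continuous_finset_sum _ fun k3 _ => continuous_finset_sum _ fun k4 _ => zygContT _ _ _)]
  refine Finset.sum_congr rfl fun k2 _ => ?_
  rw [intervalIntegral.integral_finset_sum (fun k3 _ => by
    refine Continuous.intervalIntegrable ?_ _ _
    exact continuous_finset_sum _ fun k4 _ => zygContT _ _ _)]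
  refine Finset.sum_congr rfl fun k3 _ => ?_
  rw [intervalIntegral.integral_finset_sum (fun k4 _ => (zygContT _ _ _).intervalIntegrable _ _)]
  refine Finset.sum_congr rfl fun k4 _ => ?_
  rw [intervalIntegral.integral_mul_const, intervalIntegral.integral_const_mul, zygT]

lemma zygComb (k1 k2 k3 k4 : ℤ) (h1 : k1 + k2 = k3 + k4) (h2 : k1^2 + k2^2 = k3^2 + k4^2) :
    (k3 = k1 ∧ k4 = k2) ∨ (k3 = k2 ∧ k4 = k1) := by
  have hS : k4 = k1 + k2 - k3 := by omega
  subst hS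
  have h : 2 * ((k1 - k3) * (k1 - (k1 + k2 - k3))) = 0 := by linear_combination h2
  have h' : (k1 - k3) * (k1 - (k1 + k2 - k3)) = 0 := by omega
  rcases mul_eq_zero.mp h' with h'' | h''
  · exact Or.inl ⟨by omega, by omega⟩
  · exact Or.inr ⟨by omega, by omega⟩

lemma zygBound (a : ℤ → ℂ) (k1 k2 k3 k4 : ℤ) :
    (a k1 * a k2 * (starRingEnd ℂ) (a k3) * (starRingEnd ℂ) (a k4) *
      (if k1^2+k2^2-k3^2-k4^2 = 0 then ((1 / (2 * π) : ℝ):ℂ) else 0) *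
      (if k1+k2-k3-k4 = 0 then (1:ℂ) else 0)).re
    ≤ (if k3 = k1 then (if k4 = k2 then
          (1 / (2 * π)) * (‖a k1‖ ^ 2 * ‖a k2‖ ^ 2) else 0) else 0)
      + (if k3 = k2 then (if k4 = k1 then
          (1 / (2 * π)) * (‖a k1‖ ^ 2 * ‖a k2‖ ^ 2) else 0) else 0) := by
  by_cases hn : k1+k2-k3-k4 = 0
  · by_cases hm : k1^2+k2^2-k3^2-k4^2 = 0
    · rw [if_pos hn, if_pos hm, mul_one]
      rcases zygComb k1 k2 k3 k4 (by omega) (by linarith) with ⟨h3, h4⟩ | ⟨h3, h4⟩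
      · rw [h3, h4, if_pos rfl, if_pos rfl]
        rw [show a k1 * a k2 * (starRingEnd ℂ) (a k1) * (starRingEnd ℂ) (a k2)
            = ((Complex.normSq (a k1) * Complex.normSq (a k2) : ℝ):ℂ) from by
          rw [show a k1 * a k2 * (starRingEnd ℂ) (a k1) * (starRingEnd ℂ) (a k2)
              = (a k1 * (starRingEnd ℂ) (a k1)) * (a k2 * (starRingEnd ℂ) (a k2)) by ring,
            Complex.mul_conj, Complex.mul_conj]; push_cast; ring,
          ← Complex.ofReal_mul, Complex.ofReal_re]
        rw [show (1 / (2 * π)) * (‖a k1‖ ^ 2 * ‖a k2‖ ^ 2)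
            = Complex.normSq (a k1) * Complex.normSq (a k2) * (1 / (2 * π)) from by
          rw [Complex.sq_norm, Complex.sq_norm]; ring]
        refine le_add_of_nonneg_right ?_
        split_ifs <;>
          first
          | positivity
          | exact mul_nonneg (mul_nonneg (Complex.normSq_nonneg _) (Complex.normSq_nonneg _))
              (by positivity)
      · rw [h3, h4, if_pos rfl, if_pos rfl]
        rw [show a k1 * a k2 * (starRingEnd ℂ) (a k2) * (starRingEnd ℂ) (a k1)
            = ((Complex.normSq (a k1) * Complex.normSq (a k2) : ℝ):ℂ) from by
          rw [show a k1 * a k2 * (starRingEnd ℂ) (a k2) * (starRingEnd ℂ) (a k1)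
              = (a k1 * (starRingEnd ℂ) (a k1)) * (a k2 * (starRingEnd ℂ) (a k2)) by ring,
            Complex.mul_conj, Complex.mul_conj]; push_cast; ring,
          ← Complex.ofReal_mul, Complex.ofReal_re]
        rw [show (1 / (2 * π)) * (‖a k1‖ ^ 2 * ‖a k2‖ ^ 2)
            = Complex.normSq (a k1) * Complex.normSq (a k2) * (1 / (2 * π)) from by
          rw [Complex.sq_norm, Complex.sq_norm]; ring]
        refine le_add_of_nonneg_left ?_
        split_ifs <;>
          first
          | positivity
          | exact mul_nonneg (mul_nonneg (Complex.normSq_nonneg _) (Complex.normSq_nonneg _))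
              (by positivity)
    · rw [if_neg hm, mul_zero, zero_mul, Complex.zero_re]
      refine add_nonneg ?_ ?_ <;> (split_ifs <;> positivity)
  · rw [if_neg hn, mul_zero, Complex.zero_re]
    refine add_nonneg ?_ ?_ <;> (split_ifs <;> positivity)


/-- Zygmund's L⁴ estimate for the periodic Schrödinger flow:
∫₀^{1/(2π)} ∫₀¹ |∑ a_k e^{-4π²ik²t} e^{2πikx}|⁴ dx dt ≤ C (∑ |a_k|²)². -/
theorem zygmund_L4 :
    ∃ C > 0, ∀ (s : Finset ℤ) (a : ℤ → ℂ),
      (∫ t in (0 : ℝ)..(1 / (2 * π)), ∫ x in (0 : ℝ)..1,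
          ‖∑ k ∈ s,
            a k * Complex.exp (-4 * π ^ 2 * Complex.I * (k : ℂ) ^ 2 * t) *
              Complex.exp (2 * π * Complex.I * (k : ℂ) * x)‖ ^ 4)
        ≤ C * (∑ k ∈ s, ‖a k‖ ^ 2) ^ 2 := by
  refine ⟨1 / π, by positivity, fun s a => ?_⟩
  have hz : ∀ (t x : ℝ), (∑ k ∈ s,
      a k * Complex.exp (-4 * π ^ 2 * Complex.I * (k : ℂ) ^ 2 * t) *
        Complex.exp (2 * π * Complex.I * (k : ℂ) * x)) = ∑ k ∈ s, zf a k t x :=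
    fun _ _ => rfl
  simp only [hz]
  rw [zygOuter s a]
  have hpull : ∀ (p : Prop) [Decidable p] (f : ℤ → ℝ),
      (∑ k ∈ s, if p then f k else 0) = if p then ∑ k ∈ s, f k else 0 := by
    intro p _ f; split_ifs <;> simp
  calc (∑ k1 ∈ s, ∑ k2 ∈ s, ∑ k3 ∈ s, ∑ k4 ∈ s,
          a k1 * a k2 * (starRingEnd ℂ) (a k3) * (starRingEnd ℂ) (a k4) *
            (if k1^2+k2^2-k3^2-k4^2 = 0 then ((1 / (2 * π) : ℝ):ℂ) else 0) *
            (if k1+k2-k3-k4 = 0 then (1:ℂ) else 0)).re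
      = ∑ k1 ∈ s, ∑ k2 ∈ s, ∑ k3 ∈ s, ∑ k4 ∈ s,
          (a k1 * a k2 * (starRingEnd ℂ) (a k3) * (starRingEnd ℂ) (a k4) *
            (if k1^2+k2^2-k3^2-k4^2 = 0 then ((1 / (2 * π) : ℝ):ℂ) else 0) *
            (if k1+k2-k3-k4 = 0 then (1:ℂ) else 0)).re := by
        simp only [Complex.re_sum]
    _ ≤ ∑ k1 ∈ s, ∑ k2 ∈ s, ∑ k3 ∈ s, ∑ k4 ∈ s,
          ((if k3 = k1 then (if k4 = k2 then
              (1 / (2 * π)) * (‖a k1‖ ^ 2 * ‖a k2‖ ^ 2) else 0) else 0)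
            + (if k3 = k2 then (if k4 = k1 then
              (1 / (2 * π)) * (‖a k1‖ ^ 2 * ‖a k2‖ ^ 2) else 0) else 0)) :=
        Finset.sum_le_sum fun k1 _ => Finset.sum_le_sum fun k2 _ =>
          Finset.sum_le_sum fun k3 _ => Finset.sum_le_sum fun k4 _ => zygBound a k1 k2 k3 k4
    _ = ∑ k1 ∈ s, ∑ k2 ∈ s,
          ((1 / (2 * π)) * (‖a k1‖ ^ 2 * ‖a k2‖ ^ 2)
            + (1 / (2 * π)) * (‖a k1‖ ^ 2 * ‖a k2‖ ^ 2)) := by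
        refine Finset.sum_congr rfl fun k1 hk1 => Finset.sum_congr rfl fun k2 hk2 => ?_
        simp only [Finset.sum_add_distrib, hpull, Finset.sum_ite_eq', hk1, hk2, if_true]
    _ = ∑ k1 ∈ s, ∑ k2 ∈ s,
          (1 / π) * (‖a k1‖ ^ 2 * ‖a k2‖ ^ 2) := by
        refine Finset.sum_congr rfl fun k1 _ => Finset.sum_congr rfl fun k2 _ => ?_
        rw [← two_mul, show (2:ℝ) * ((1 / (2 * π)) * (‖a k1‖ ^ 2 *
          ‖a k2‖ ^ 2)) = (2 * (1 / (2 * π))) * (‖a k1‖ ^ 2 *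
          ‖a k2‖ ^ 2) from by ring]
        congr 1
        field_simp
    _ = (1 / π) * (∑ k ∈ s, ‖a k‖ ^ 2) ^ 2 := by
        rw [sq, Finset.sum_mul_sum, Finset.mul_sum]
        exact Finset.sum_congr rfl fun k1 _ => by rw [Finset.mul_sum]
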